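/- The Airy profile q(x,y) = J₁²(α√(x²+y²)) / (π(x²+y²)) with α = 2π n_a/λ > 0 is a probability density on ℝ², i.e., it is nonnegative and integrates to 1. -/

import Mathlib

open MeasureTheory intervalIntegral

/-- The Bessel function of the first kind of order one, via its integral
representation `J₁(x) = (1/π) ∫_0^π cos(θ - x sin θ) dθ`. -/
noncomputable def besselJ1 (x : ℝ) : ℝ :=
  (1 / Real.pi) * ∫ θ in (0:ℝ)..Real.pi, Real.cos (θ - x * Real.sin θ)

/-- The Airy profile with parameter `α = 2π n_a / λ`, extended continuously at the
origin (where its limit is `α²/(4π)`). -/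
noncomputable def airyProfile (α : ℝ) (p : ℝ × ℝ) : ℝ :=
  if p = 0 then α ^ 2 / (4 * Real.pi)
  else (besselJ1 (α * Real.sqrt (p.1 ^ 2 + p.2 ^ 2))) ^ 2 / (Real.pi * (p.1 ^ 2 + p.2 ^ 2))

noncomputable section AiryAux
open Real Set Filter Complex FourierTransform

/-- Auxiliary: `J₀` via its integral representation. -/
def bJ0 (x : ℝ) : ℝ :=
  (1 / Real.pi) * ∫ θ in (0:ℝ)..Real.pi, Real.cos (x * Real.sin θ)


lemma hasDerivAt_besselA (n x₀ : ℝ) :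
    HasDerivAt (fun x => ∫ θ in (0:ℝ)..π, Real.cos (n*θ - x * Real.sin θ))
      (∫ θ in (0:ℝ)..π, Real.sin θ * Real.sin (n*θ - x₀ * Real.sin θ)) x₀ := by
  have h := intervalIntegral.hasDerivAt_integral_of_dominated_loc_of_deriv_le
    (F := fun x θ => Real.cos (n*θ - x * Real.sin θ))
    (F' := fun x θ => Real.sin θ * Real.sin (n*θ - x * Real.sin θ))
    (x₀ := x₀) (a := 0) (b := π) (bound := fun _ => 1) (μ := volume)
    (Metric.ball_mem_nhds x₀ one_pos)
    (Filter.Eventually.of_forall fun x =>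
      (Continuous.aestronglyMeasurable (by fun_prop)))
    (Continuous.intervalIntegrable (by fun_prop) 0 π)
    (Continuous.aestronglyMeasurable (by fun_prop))
    (Filter.Eventually.of_forall fun θ _ => fun x _ => by
      rw [norm_mul]
      exact mul_le_one₀ (by simpa using Real.abs_sin_le_one θ) (norm_nonneg _)
        (by simpa using Real.abs_sin_le_one _))
    intervalIntegrable_const
    (Filter.Eventually.of_forall fun θ _ => fun x _ => by
      have hv : HasDerivAt (fun x : ℝ => n*θ - x * Real.sin θ) (-Real.sin θ) x := by
        simpa using (hasDerivAt_id x).mul_const (Real.sin θ) |>.const_sub (n*θ)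
      have := (Real.hasDerivAt_cos (n*θ - x * Real.sin θ)).comp x hv
      exact this.congr_deriv (by ring))
  exact h.2

/-- FTC: `∫₀^π d/dθ sin(n θ - x sin θ) dθ = 0` for n = 0, 1 style uses. -/
lemma ftc_zero (n x : ℝ) (hn : Real.sin (n * π) = 0) :
    ∫ θ in (0:ℝ)..π, (n - x * Real.cos θ) * Real.cos (n*θ - x * Real.sin θ) = 0 := by
  have key : ∀ θ : ℝ, HasDerivAt (fun θ => Real.sin (n*θ - x * Real.sin θ))
      ((n - x * Real.cos θ) * Real.cos (n*θ - x * Real.sin θ)) θ := by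
    intro θ
    have hv : HasDerivAt (fun θ : ℝ => n*θ - x * Real.sin θ)
        (n - x * Real.cos θ) θ := by
      simpa using ((hasDerivAt_id θ).const_mul n).fun_sub ((Real.hasDerivAt_sin θ).const_mul x)
    have := (Real.hasDerivAt_sin (n*θ - x * Real.sin θ)).comp θ hv
    exact this.congr_deriv (by ring)
  rw [intervalIntegral.integral_eq_sub_of_hasDerivAt (fun θ _ => key θ)
    (Continuous.intervalIntegrable (by fun_prop) 0 π)]
  simp [hn]

/-- `∫₀^π x cos θ cos(x sin θ) dθ = 0`. -/
lemma cos_part_zero (x : ℝ) :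
    ∫ θ in (0:ℝ)..π, Real.cos θ * Real.cos (x * Real.sin θ) = 0 := by
  rcases eq_or_ne x 0 with rfl | hx
  · simp
  · have h := ftc_zero 0 x (by simp)
    have : ∫ θ in (0:ℝ)..π, (0 - x * Real.cos θ) * Real.cos (0*θ - x * Real.sin θ)
        = -x * ∫ θ in (0:ℝ)..π, Real.cos θ * Real.cos (x * Real.sin θ) := by
      rw [← intervalIntegral.integral_const_mul]
      apply intervalIntegral.integral_congr
      intro θ _
      simp only []
      rw [show (0:ℝ)*θ - x * Real.sin θ = -(x * Real.sin θ) by ring, Real.cos_neg]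
      ring
    rw [this] at h
    rcases mul_eq_zero.1 h with h' | h'
    · exact absurd h' (by simpa using hx)
    · exact h'

/-- `J₁(x) = (1/π) ∫₀^π sin θ sin(x sin θ) dθ`. -/
lemma besselJ1_eq (x : ℝ) :
    besselJ1 x = (1/π) * ∫ θ in (0:ℝ)..π, Real.sin θ * Real.sin (x * Real.sin θ) := by
  unfold besselJ1
  congr 1
  have : ∀ θ : ℝ, Real.cos (θ - x * Real.sin θ)
      = Real.cos θ * Real.cos (x * Real.sin θ) + Real.sin θ * Real.sin (x * Real.sin θ) :=
    fun θ => Real.cos_sub θ (x * Real.sin θ)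
  rw [intervalIntegral.integral_congr (g := fun θ => Real.cos θ * Real.cos (x * Real.sin θ)
      + Real.sin θ * Real.sin (x * Real.sin θ)) (fun θ _ => this θ),
    intervalIntegral.integral_add (Continuous.intervalIntegrable (by fun_prop) 0 π)
      (Continuous.intervalIntegrable (by fun_prop) 0 π), cos_part_zero, zero_add]

lemma hasDerivAt_bJ0 (x : ℝ) : HasDerivAt bJ0 (-(besselJ1 x)) x := by
  have h := (hasDerivAt_besselA 0 x).const_mul (1/π)
  have hfun : (fun x => (1/π) * ∫ θ in (0:ℝ)..π, Real.cos (0*θ - x * Real.sin θ)) = bJ0 := by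
    funext y
    unfold bJ0
    congr 1
    apply intervalIntegral.integral_congr
    intro θ _
    simp only []
    rw [show (0:ℝ)*θ - y * Real.sin θ = -(y * Real.sin θ) by ring, Real.cos_neg]
  rw [hfun] at h
  refine h.congr_deriv ?_
  have heq : (∫ θ in (0:ℝ)..π, Real.sin θ * Real.sin (0*θ - x * Real.sin θ))
      = ∫ θ in (0:ℝ)..π, -(Real.sin θ * Real.sin (x * Real.sin θ)) := by
    apply intervalIntegral.integral_congr
    intro θ _
    simp only []
    rw [show (0:ℝ)*θ - x*Real.sin θ = -(x*Real.sin θ) by ring, Real.sin_neg]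
    ring
  rw [besselJ1_eq, heq, intervalIntegral.integral_neg]
  ring

lemma hasDerivAt_besselJ1 {x : ℝ} (hx : x ≠ 0) :
    HasDerivAt besselJ1 (bJ0 x - besselJ1 x / x) x := by
  have h := (hasDerivAt_besselA 1 x).const_mul (1/π)
  have hfun : (fun x => (1/π) * ∫ θ in (0:ℝ)..π, Real.cos (1*θ - x * Real.sin θ)) = besselJ1 := by
    funext y
    unfold besselJ1
    congr 1
    apply intervalIntegral.integral_congr
    intro θ _
    norm_num
  rw [hfun] at h
  set I : ℝ := ∫ θ in (0:ℝ)..π, Real.sin θ * Real.sin (1*θ - x * Real.sin θ) with hIdef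
  set P : ℝ := ∫ θ in (0:ℝ)..π, Real.cos (x * Real.sin θ) with hPdef
  set Q : ℝ := ∫ θ in (0:ℝ)..π, Real.cos (θ - x * Real.sin θ) with hQdef
  have key : x * I = x * P - Q := by
    have hptwise : ∀ θ : ℝ, x * (Real.sin θ * Real.sin (1*θ - x * Real.sin θ))
        = (x * Real.cos (x * Real.sin θ) - Real.cos (θ - x * Real.sin θ))
          + (1 - x * Real.cos θ) * Real.cos (1*θ - x * Real.sin θ) := by
      intro θ
      have hcos : Real.cos (x * Real.sin θ)
          = Real.cos θ * Real.cos (θ - x * Real.sin θ)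
            + Real.sin θ * Real.sin (θ - x * Real.sin θ) := by
        rw [← Real.cos_sub]
        congr 1
        ring
      rw [one_mul, hcos]
      ring
    calc x * I = ∫ θ in (0:ℝ)..π, x * (Real.sin θ * Real.sin (1*θ - x * Real.sin θ)) := by
          rw [intervalIntegral.integral_const_mul]
      _ = ∫ θ in (0:ℝ)..π, ((x * Real.cos (x * Real.sin θ) - Real.cos (θ - x * Real.sin θ))
            + (1 - x * Real.cos θ) * Real.cos (1*θ - x * Real.sin θ)) :=
          intervalIntegral.integral_congr (fun θ _ => hptwise θ)
      _ = (∫ θ in (0:ℝ)..π, (x * Real.cos (x * Real.sin θ) - Real.cos (θ - x * Real.sin θ)))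
            + ∫ θ in (0:ℝ)..π, (1 - x * Real.cos θ) * Real.cos (1*θ - x * Real.sin θ) :=
          intervalIntegral.integral_add (Continuous.intervalIntegrable (by fun_prop) 0 π)
            (Continuous.intervalIntegrable (by fun_prop) 0 π)
      _ = x * P - Q := by
          rw [ftc_zero 1 x (by simp), add_zero,
            intervalIntegral.integral_sub (Continuous.intervalIntegrable (by fun_prop) 0 π)
              (Continuous.intervalIntegrable (by fun_prop) 0 π),
            intervalIntegral.integral_const_mul]
  have hπ : (π:ℝ) ≠ 0 := Real.pi_ne_zero
  have : (1/π) * I = bJ0 x - besselJ1 x / x := by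
    unfold bJ0 besselJ1
    rw [← hPdef, ← hQdef]
    field_simp
    linear_combination key
  rw [this] at h
  exact h


lemma hasDerivAt_besselJ1' (x : ℝ) :
    HasDerivAt besselJ1
      ((1/π) * ∫ θ in (0:ℝ)..π, Real.sin θ * Real.sin (1*θ - x * Real.sin θ)) x := by
  have h := (hasDerivAt_besselA 1 x).const_mul (1/π)
  have hfun : (fun x => (1/π) * ∫ θ in (0:ℝ)..π, Real.cos (1*θ - x * Real.sin θ))
      = besselJ1 := by
    funext y
    unfold besselJ1
    congr 1
    apply intervalIntegral.integral_congr
    intro θ _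
    norm_num
  rw [hfun] at h
  exact h


lemma bJ0_zero : bJ0 0 = 1 := by
  unfold bJ0
  simp [Real.pi_ne_zero]

lemma besselJ1_zero : besselJ1 0 = 0 := by
  unfold besselJ1
  simp

/-- Symmetry about `π/2`. -/
lemma sym_integral (h : ℝ → ℝ) (hc : Continuous h) :
    ∫ θ in (0:ℝ)..π, h (Real.sin θ) = 2 * ∫ θ in (0:ℝ)..(π/2), h (Real.sin θ) := by
  have h1 : ∫ θ in (0:ℝ)..(π/2), h (Real.sin θ)
      = ∫ θ in (π/2:ℝ)..π, h (Real.sin θ) := by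
    have := intervalIntegral.integral_comp_sub_left (a := (0:ℝ)) (b := π/2)
      (fun θ => h (Real.sin θ)) π
    simp only [Real.sin_pi_sub, sub_zero, show π - π/2 = π/2 by ring] at this
    exact this
  have h2 := intervalIntegral.integral_add_adjacent_intervals
    (a := (0:ℝ)) (b := π/2) (c := π) (μ := volume)
    (Continuous.intervalIntegrable (show Continuous fun θ => h (Real.sin θ) from
      hc.comp Real.continuous_sin) _ _)
    (Continuous.intervalIntegrable (show Continuous fun θ => h (Real.sin θ) from
      hc.comp Real.continuous_sin) _ _)
  rw [← h2, ← h1]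
  ring

lemma sin_image : Real.sin '' Ioo 0 (π/2) = Ioo (0:ℝ) 1 := by
  ext t
  constructor
  · rintro ⟨θ, hθ, rfl⟩
    refine Set.mem_Ioo.mpr ⟨Real.sin_pos_of_pos_of_lt_pi hθ.1 (hθ.2.trans (by linarith [Real.pi_pos])), ?_⟩
    have := Real.strictMonoOn_sin (Set.mem_Icc.2 ⟨by linarith [hθ.1, Real.pi_pos], hθ.2.le⟩)
      (Set.mem_Icc.2 ⟨by linarith [Real.pi_pos], le_refl _⟩) hθ.2
    simpa using this
  · rintro ⟨ht0, ht1⟩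
    exact ⟨Real.arcsin t, ⟨Real.arcsin_pos.2 ht0, Real.arcsin_lt_pi_div_two.2 ht1⟩,
      Real.sin_arcsin (by linarith) (by linarith)⟩

lemma sin_injOn : InjOn Real.sin (Ioo 0 (π/2)) :=
  Real.injOn_sin.mono (fun θ hθ => Set.mem_Icc.2 ⟨by linarith [hθ.1, Real.pi_pos], hθ.2.le⟩)

lemma sqrt_one_sub_sin_sq {θ : ℝ} (hθ : θ ∈ Ioo 0 (π/2)) :
    Real.sqrt (1 - Real.sin θ ^ 2) = Real.cos θ := by
  have hcos : 0 ≤ Real.cos θ := Real.cos_nonneg_of_mem_Icc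
    (Set.mem_Icc.2 ⟨by linarith [hθ.1, Real.pi_pos], hθ.2.le⟩)
  rw [show (1:ℝ) - Real.sin θ ^ 2 = Real.cos θ ^ 2 by
    have := Real.sin_sq_add_cos_sq θ; linarith]
  exact Real.sqrt_sq hcos

lemma cov (h : ℝ → ℝ) :
    ∫ t in Ioo (0:ℝ) 1, h t / Real.sqrt (1 - t^2) = ∫ θ in Ioo 0 (π/2), h (Real.sin θ) := by
  rw [← sin_image, integral_image_eq_integral_abs_deriv_smul measurableSet_Ioo
    (fun θ _ => (Real.hasDerivAt_sin θ).hasDerivWithinAt) sin_injOn]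
  apply setIntegral_congr_fun measurableSet_Ioo
  intro θ hθ
  have hcos : 0 < Real.cos θ :=
    Real.cos_pos_of_mem_Ioo ⟨by linarith [hθ.1, Real.pi_pos], hθ.2⟩
  simp only [smul_eq_mul]
  rw [sqrt_one_sub_sin_sq hθ, abs_of_pos hcos]
  field_simp

lemma cov_integrable (h : ℝ → ℝ) (hc : Continuous h) :
    IntegrableOn (fun t => h t / Real.sqrt (1 - t^2)) (Ioo (0:ℝ) 1) := by
  rw [← sin_image, integrableOn_image_iff_integrableOn_abs_deriv_smul measurableSet_Ioo
    (fun θ _ => (Real.hasDerivAt_sin θ).hasDerivWithinAt) sin_injOn]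
  have hbase : IntegrableOn (fun θ => h (Real.sin θ)) (Ioo 0 (π/2)) :=
    ((hc.comp Real.continuous_sin).integrableOn_Icc (a := 0) (b := π/2)).mono_set
      Ioo_subset_Icc_self
  apply hbase.congr_fun ?_ measurableSet_Ioo
  intro θ hθ
  have hcos : 0 < Real.cos θ :=
    Real.cos_pos_of_mem_Ioo ⟨by linarith [hθ.1, Real.pi_pos], hθ.2⟩
  simp only [smul_eq_mul]
  rw [sqrt_one_sub_sin_sq hθ, abs_of_pos hcos]
  field_simp

/-- Riemann-Lebesgue for real integrable functions: cosine version. -/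
lemma rl_cos_sin {f : ℝ → ℝ} (hf : Integrable f) :
    Tendsto (fun x => ∫ t, Real.cos (x*t) * f t) atTop (nhds 0) ∧
    Tendsto (fun x => ∫ t, Real.sin (x*t) * f t) atTop (nhds 0) := by
  have hF : Integrable (fun t => (f t : ℂ)) := hf.ofReal
  have h1 : Tendsto (𝓕 fun t => (f t : ℂ)) (cocompact ℝ) (nhds 0) :=
    Real.zero_at_infty_fourier _
  have hmap : Tendsto (fun x : ℝ => x / (2*π)) atTop (cocompact ℝ) := by
    rw [cocompact_eq_atBot_atTop]
    exact (tendsto_id.atTop_div_const (by positivity)).mono_right le_sup_right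
  have h2 : Tendsto (fun x => 𝓕 (fun t => (f t : ℂ)) (x/(2*π))) atTop (nhds 0) :=
    h1.comp hmap
  have heq : ∀ x : ℝ, 𝓕 (fun t => (f t : ℂ)) (x/(2*π))
      = ∫ t, Complex.exp ((-(x*t) : ℝ) * Complex.I) * (f t : ℂ) := by
    intro x
    rw [Real.fourier_real_eq_integral_exp_smul]
    congr 1
    funext t
    rw [smul_eq_mul]
    congr 3
    push_cast
    field_simp [Complex.ofReal_ne_zero.mpr Real.pi_ne_zero]
  simp_rw [heq] at h2
  have hint : ∀ x : ℝ, Integrable (fun t => Complex.exp ((-(x*t) : ℝ) * Complex.I) * (f t : ℂ)) := by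
    intro x
    apply hF.bdd_mul (c := 1)
    · exact (Complex.continuous_exp.comp (by fun_prop)).aestronglyMeasurable
    · refine Filter.Eventually.of_forall fun t => ?_
      rw [Complex.norm_exp_ofReal_mul_I]
  constructor
  · have := (Complex.continuous_re.tendsto 0).comp h2
    simp only [Function.comp_def, Complex.zero_re] at this
    convert this using 2 with x
    have h4 := integral_re (hint x)
    simp only [RCLike.re_to_complex] at h4
    rw [← h4]
    congr 1
    funext t
    simp only [Complex.mul_re, Complex.ofReal_re, Complex.ofReal_im, mul_zero, sub_zero,
      Complex.exp_ofReal_mul_I_re, Real.cos_neg]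
  · have := (Complex.continuous_im.tendsto 0).comp h2
    simp only [Function.comp_def, Complex.zero_im] at this
    have h3 := this.neg
    rw [neg_zero] at h3
    convert h3 using 2 with x
    have h4 := integral_im (hint x)
    simp only [RCLike.im_to_complex] at h4
    rw [← h4, ← MeasureTheory.integral_neg]
    congr 1
    funext t
    simp only [Complex.mul_im, Complex.ofReal_re, Complex.ofReal_im, mul_zero, add_zero,
      zero_add, Complex.exp_ofReal_mul_I_im, Real.sin_neg]
    ring

/-- reduce an integral over [0,π] of h(sin θ) to a weighted integral on (0,1). -/
lemma reduce (h : ℝ → ℝ) (hc : Continuous h) :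
    ∫ θ in (0:ℝ)..π, h (Real.sin θ) = 2 * ∫ t in Ioo (0:ℝ) 1, h t / Real.sqrt (1 - t^2) := by
  rw [sym_integral h hc, cov h]
  congr 1
  rw [intervalIntegral.integral_of_le (by positivity), integral_Ioc_eq_integral_Ioo]

noncomputable def w0 : ℝ → ℝ := (Ioo (0:ℝ) 1).indicator (fun t => 1 / Real.sqrt (1 - t^2))
noncomputable def w1 : ℝ → ℝ := (Ioo (0:ℝ) 1).indicator (fun t => t / Real.sqrt (1 - t^2))

lemma w0_integrable : Integrable w0 := by
  rw [w0, integrable_indicator_iff measurableSet_Ioo]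
  exact cov_integrable (fun _ => 1) continuous_const
lemma w1_integrable : Integrable w1 := by
  rw [w1, integrable_indicator_iff measurableSet_Ioo]
  exact cov_integrable id continuous_id

lemma bJ0_tendsto : Tendsto bJ0 atTop (nhds 0) := by
  have key : ∀ x : ℝ, bJ0 x = (2/π) * ∫ t, Real.cos (x*t) * w0 t := by
    intro x
    unfold bJ0
    rw [show (∫ θ in (0:ℝ)..π, Real.cos (x * Real.sin θ))
        = ∫ θ in (0:ℝ)..π, (fun s => Real.cos (x*s)) (Real.sin θ) from rfl,
      reduce (fun s => Real.cos (x*s)) (by fun_prop)]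
    rw [← MeasureTheory.integral_indicator measurableSet_Ioo]
    have : ∀ t : ℝ, (Ioo (0:ℝ) 1).indicator
        (fun t => Real.cos (x*t) / Real.sqrt (1 - t^2)) t
        = Real.cos (x*t) * w0 t := by
      intro t
      unfold w0
      by_cases ht : t ∈ Ioo (0:ℝ) 1
      · rw [Set.indicator_of_mem ht, Set.indicator_of_mem ht, mul_one_div]
      · rw [Set.indicator_of_notMem ht, Set.indicator_of_notMem ht, mul_zero]
    simp_rw [this]
    ring
  exact Filter.Tendsto.congr (fun x => (key x).symm)
    (by simpa using ((rl_cos_sin w0_integrable).1).const_mul (2/π))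

lemma besselJ1_tendsto : Tendsto besselJ1 atTop (nhds 0) := by
  have key : ∀ x : ℝ, besselJ1 x = (2/π) * ∫ t, Real.sin (x*t) * w1 t := by
    intro x
    rw [besselJ1_eq]
    rw [show (∫ θ in (0:ℝ)..π, Real.sin θ * Real.sin (x * Real.sin θ))
        = ∫ θ in (0:ℝ)..π, (fun s => s * Real.sin (x*s)) (Real.sin θ) from rfl,
      reduce (fun s => s * Real.sin (x*s)) (by fun_prop)]
    rw [← MeasureTheory.integral_indicator measurableSet_Ioo]
    have : ∀ t : ℝ, (Ioo (0:ℝ) 1).indicator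
        (fun t => t * Real.sin (x*t) / Real.sqrt (1 - t^2)) t
        = Real.sin (x*t) * w1 t := by
      intro t
      unfold w1
      by_cases ht : t ∈ Ioo (0:ℝ) 1
      · rw [Set.indicator_of_mem ht, Set.indicator_of_mem ht]
        ring
      · rw [Set.indicator_of_notMem ht, Set.indicator_of_notMem ht, mul_zero]
    simp_rw [this]
    ring
  exact Filter.Tendsto.congr (fun x => (key x).symm)
    (by simpa using ((rl_cos_sin w1_integrable).2).const_mul (2/π))

lemma continuous_besselJ1 : Continuous besselJ1 :=
  continuous_iff_continuousAt.2 fun x => (hasDerivAt_besselJ1' x).continuousAt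

lemma continuous_bJ0 : Continuous bJ0 :=
  continuous_iff_continuousAt.2 fun x => (hasDerivAt_bJ0 x).continuousAt

noncomputable def G (x : ℝ) : ℝ := -((bJ0 x)^2 + (besselJ1 x)^2) / 2

lemma hasDerivAt_G {x : ℝ} (hx : x ≠ 0) : HasDerivAt G (besselJ1 x ^ 2 / x) x := by
  have h0 : HasDerivAt (fun x => (bJ0 x)^2) (2 * bJ0 x * (-(besselJ1 x))) x := by
    simpa using (hasDerivAt_bJ0 x).fun_pow 2
  have h1 : HasDerivAt (fun x => (besselJ1 x)^2)
      (2 * besselJ1 x * (bJ0 x - besselJ1 x / x)) x := by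
    simpa using (hasDerivAt_besselJ1 hx).fun_pow 2
  have := ((h0.add h1).neg).div_const 2
  refine this.congr_deriv ?_
  field_simp
  ring

lemma G_tendsto : Tendsto G atTop (nhds 0) := by
  have := (((bJ0_tendsto.pow 2).add (besselJ1_tendsto.pow 2)).neg).div_const 2
  have h2 : Tendsto (fun x => -(bJ0 x ^ 2 + besselJ1 x ^ 2) / 2) atTop (nhds 0) := by
    simpa using this
  exact h2.congr (fun x => rfl)

lemma key_integrable : IntegrableOn (fun x => besselJ1 x ^ 2 / x) (Ioi (0:ℝ)) := by
  have hc : ContinuousWithinAt G (Ici 0) 0 :=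
    ((((continuous_bJ0.pow 2).add (continuous_besselJ1.pow 2)).neg.div_const
      (2:ℝ))).continuousWithinAt
  exact integrableOn_Ioi_deriv_of_nonneg hc (fun x hx => hasDerivAt_G (ne_of_gt hx))
    (fun x hx => div_nonneg (sq_nonneg _) (le_of_lt hx)) G_tendsto

lemma key_integral : ∫ x in Ioi (0:ℝ), besselJ1 x ^ 2 / x = 1/2 := by
  have hc : ContinuousWithinAt G (Ici 0) 0 :=
    ((((continuous_bJ0.pow 2).add (continuous_besselJ1.pow 2)).neg.div_const
      (2:ℝ))).continuousWithinAt
  have := integral_Ioi_of_hasDerivAt_of_nonneg (g := G) (g' := fun x => besselJ1 x ^ 2 / x)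
    (a := 0) (l := 0) hc (fun x hx => hasDerivAt_G (ne_of_gt hx))
    (fun x hx => div_nonneg (sq_nonneg _) (le_of_lt hx)) G_tendsto
  rw [this, G, bJ0_zero, besselJ1_zero]
  norm_num


/-- The Airy profile `q(x,y) = J₁²(α√(x²+y²))/(π(x²+y²))`, `α > 0`, is a probability
density on ℝ²: it is nonnegative and integrates to one. -/
theorem airyProfile_isProbabilityDensity (α : ℝ) (hα : 0 < α) :
    (∀ p : ℝ × ℝ, 0 ≤ airyProfile α p) ∧ (∫ p : ℝ × ℝ, airyProfile α p) = 1 := by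
  constructor
  · intro p
    unfold airyProfile
    split_ifs with h
    · positivity
    · apply div_nonneg (sq_nonneg _)
      have : 0 ≤ p.1 ^ 2 + p.2 ^ 2 := by positivity
      positivity
  · rw [← integral_comp_polarCoord_symm]
    have htarget : polarCoord.target = Ioi (0:ℝ) ×ˢ Ioo (-π) π := rfl
    rw [htarget]
    have hcongr : ∀ p ∈ Ioi (0:ℝ) ×ˢ Ioo (-π) π,
        p.1 • airyProfile α (polarCoord.symm p)
        = (fun r => besselJ1 (α * r) ^ 2 / (π * r)) p.1 * (fun _ : ℝ => (1:ℝ)) p.2 := by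
      rintro ⟨r, θ⟩ ⟨hr, hθ⟩
      simp only [smul_eq_mul, mul_one]
      have hr0 : (0:ℝ) < r := hr
      have hsq : (r * Real.cos θ) ^ 2 + (r * Real.sin θ) ^ 2 = r ^ 2 := by
        have := Real.sin_sq_add_cos_sq θ
        ring_nf
        nlinarith [this]
      have hne : (r * Real.cos θ, r * Real.sin θ) ≠ (0 : ℝ × ℝ) := by
        intro hcon
        rw [Prod.ext_iff] at hcon
        simp only at hcon
        rw [hcon.1, hcon.2] at hsq
        simp at hsq
        nlinarith [hsq, hr0]
      rw [show polarCoord.symm (r, θ) = (r * Real.cos θ, r * Real.sin θ) from rfl]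
      unfold airyProfile
      rw [if_neg hne]
      simp only
      rw [hsq, Real.sqrt_sq hr0.le]
      field_simp
    rw [setIntegral_congr_fun (measurableSet_Ioi.prod measurableSet_Ioo) hcongr]
    rw [Measure.volume_eq_prod]
    rw [MeasureTheory.setIntegral_prod_mul (μ := (volume : Measure ℝ)) (ν := (volume : Measure ℝ))
      (fun r => besselJ1 (α * r) ^ 2 / (π * r)) (fun _ : ℝ => (1:ℝ)) (Ioi 0) (Ioo (-π) π)]
    have h2 : (∫ θ in Ioo (-π) π, (fun _ : ℝ => (1:ℝ)) θ) = 2 * π := by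
      simp [Real.volume_Ioo]
      rw [max_eq_left (by positivity)]
      ring
    have h1 : (∫ r in Ioi (0:ℝ), (fun r => besselJ1 (α * r) ^ 2 / (π * r)) r) = 1/(2*π) := by
      have hcomp := integral_comp_mul_left_Ioi (fun x => besselJ1 x ^ 2 / (π * x)) 0 hα
      rw [mul_zero] at hcomp
      have hstep : (∫ r in Ioi (0:ℝ), besselJ1 (α * r) ^ 2 / (π * r))
          = α * ∫ r in Ioi (0:ℝ), besselJ1 (α * r) ^ 2 / (π * (α * r)) := by
        rw [← MeasureTheory.integral_const_mul]
        apply setIntegral_congr_fun measurableSet_Ioi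
        intro r hr
        have hr0 : (0:ℝ) < r := hr
        field_simp
      rw [hstep, hcomp, smul_eq_mul]
      have : (∫ x in Ioi (0:ℝ), besselJ1 x ^ 2 / (π * x)) = (1/π) * (1/2) := by
        rw [← key_integral, ← MeasureTheory.integral_const_mul]
        apply setIntegral_congr_fun measurableSet_Ioi
        intro r hr
        field_simp
      rw [this]
      field_simp [ne_of_gt hα]
    rw [h1, h2]
    field_simp

end AiryAux
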